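/- Let m_i > 1 for all i. The intrinsic group G has rank k − 1 if and only if ln m_1 / ln m_j ∈ ℚ for all 2 ≤ j ≤ k. -/

import Mathlib

lemma aux_prod (k : ℕ) (m : Fin k → ℕ) (i0 j : Fin k) (hij : i0 ≠ j) (a b : ℤ) :
    ∏ i, ((m i : ℚ)) ^ ((a • Pi.single i0 (1:ℤ) + b • Pi.single j (1:ℤ) : Fin k → ℤ) i)
      = (m i0 : ℚ) ^ a * (m j : ℚ) ^ b := by
  have h1 : ∀ i ∈ Finset.univ, i ∉ ({i0, j} : Finset (Fin k)) →
      ((m i : ℚ)) ^ ((a • Pi.single i0 (1:ℤ) + b • Pi.single j (1:ℤ) : Fin k → ℤ) i) = 1 := by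
    intro i _ hi
    simp only [Finset.mem_insert, Finset.mem_singleton, not_or] at hi
    simp [Pi.single_apply, hi.1, hi.2]
  rw [← Finset.prod_subset (Finset.subset_univ ({i0, j} : Finset (Fin k))) h1,
    Finset.prod_pair hij]
  simp [Pi.single_apply, hij, hij.symm]

lemma aux_single_prod (k : ℕ) (m : Fin k → ℕ) (i0 : Fin k) (d : ℤ) :
    ∏ i, ((m i : ℚ)) ^ ((d • Pi.single i0 (1:ℤ) : Fin k → ℤ) i) = (m i0 : ℚ) ^ d := by
  rw [Fintype.prod_eq_single i0 (fun i hi => by simp [Pi.single_apply, hi])]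
  simp

lemma aux_log (a b : ℤ) (x y : ℕ) (hx : 1 < x) (hy : 1 < y)
    (h : (x : ℚ) ^ a * (y : ℚ) ^ b = 1) :
    a * Real.log x + b * Real.log y = 0 := by
  have hx0 : (x : ℝ) ≠ 0 := by positivity
  have hy0 : (y : ℝ) ≠ 0 := by positivity
  have hR : (x : ℝ) ^ a * (y : ℝ) ^ b = 1 := by
    have := congrArg (Rat.cast (K := ℝ)) h
    push_cast at this
    exact this
  have := congrArg Real.log hR
  rwa [Real.log_mul (zpow_ne_zero _ hx0) (zpow_ne_zero _ hy0), Real.log_zpow,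
    Real.log_zpow, Real.log_one] at this
lemma aux_le (k : ℕ) (hk : 0 < k) (m : Fin k → ℕ) (hm : ∀ i, 1 < m i)
    (S : Submodule ℤ (Fin k → ℤ))
    (hS : ∀ g : Fin k → ℤ, g ∈ S ↔ ∏ i, ((m i : ℚ)) ^ (g i) = 1)
    (n : ℕ) (w : Fin n → (Fin k → ℤ)) (hw : ∀ i, w i ∈ S)
    (hind : LinearIndependent ℤ w) : n ≤ k - 1 := by
  have hnk : n ≤ k := by
    have := hind.fintype_card_le_finrank
    simpa [Module.finrank_pi] using this
  rcases Nat.lt_or_ge n k with h | h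
  · omega
  have hnk' : n = k := le_antisymm hnk h
  subst hnk'
  exfalso
  set i0 : Fin n := ⟨0, hk⟩
  set M : Matrix (Fin n) (Fin n) ℤ := Matrix.of (fun i j => w i j) with hM
  have hdet : M.det ≠ 0 := by
    intro hd
    obtain ⟨v, hv0, hv⟩ := Matrix.exists_vecMul_eq_zero_iff.mpr hd
    have : ∑ i, v i • w i = 0 := by
      funext jj
      have := congrFun hv jj
      simpa [Matrix.vecMul, dotProduct, Finset.sum_apply, hM] using this
    obtain ⟨i, hi⟩ := Function.ne_iff.mp hv0
    exact hi (Fintype.linearIndependent_iff.mp hind v this i)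
  have hmem : (M.det • Pi.single i0 (1:ℤ) : Fin n → ℤ) ∈ S := by
    have key : (M.det • Pi.single i0 (1:ℤ) : Fin n → ℤ)
        = ∑ i, M.adjugate i0 i • w i := by
      funext jj
      have := congrFun (congrFun (Matrix.adjugate_mul M) i0) jj
      simp only [Matrix.mul_apply, Matrix.smul_apply, Matrix.one_apply, smul_eq_mul] at this
      simp only [Finset.sum_apply, Pi.smul_apply, smul_eq_mul, Pi.single_apply]
      have h2 : (if jj = i0 then (1:ℤ) else 0) = if i0 = jj then 1 else 0 := by
        rcases eq_or_ne jj i0 with hj | hj; · subst hj; rfl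
        · simp [hj, hj.symm]
      rw [h2, ← this]
      rfl
    rw [key]
    exact Submodule.sum_smul_mem S _ (fun i _ => hw i)
  have h1 : ((m i0 : ℚ)) ^ M.det = 1 := by
    have := (hS _).mp hmem
    rwa [aux_single_prod] at this
  have hpos : (0:ℚ) < (m i0 : ℚ) := by
    have : 0 < m i0 := lt_trans one_pos (hm i0)
    exact_mod_cast this
  have hne1 : ((m i0 : ℚ)) ≠ 1 := by
    have := hm i0; exact_mod_cast Nat.ne_of_gt this
  refine hdet (zpow_right_injective₀ hpos hne1 ?_)
  simpa using h1
lemma aux_rat (k : ℕ) (hk : 0 < k) (m : Fin k → ℕ) (hm : ∀ i, 1 < m i)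
    (S : Submodule ℤ (Fin k → ℤ))
    (hS : ∀ g : Fin k → ℤ, g ∈ S ↔ ∏ i, ((m i : ℚ)) ^ (g i) = 1)
    (n : ℕ) (hn : n + 1 = k) (bN : Module.Basis (Fin n) ℤ S)
    (j : Fin k) (hj : j ≠ ⟨0, hk⟩) :
    ∃ q : ℚ, Real.log (m ⟨0, hk⟩) / Real.log (m j) = (q : ℝ) := by
  set i0 : Fin k := ⟨0, hk⟩ with hi0
  set w : Fin n ⊕ Fin 2 → (Fin k → ℤ) :=
    Sum.elim (fun i => (bN i : Fin k → ℤ)) ![Pi.single i0 1, Pi.single j 1] with hw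
  have hli : LinearIndependent ℤ (fun i => (bN i : Fin k → ℤ)) :=
    bN.linearIndependent.map' S.subtype (Submodule.ker_subtype S)
  have hnotind : ¬ LinearIndependent ℤ w := by
    intro hcontra
    have := hcontra.fintype_card_le_finrank
    simp [Module.finrank_pi, Fintype.card_sum] at this
    omega
  obtain ⟨g, hg0, s, hs⟩ := Fintype.not_linearIndependent_iff.mp hnotind
  set a := g (Sum.inr 0) with ha
  set b := g (Sum.inr 1) with hb
  have hsplit : ∑ i : Fin n, g (Sum.inl i) • (bN i : Fin k → ℤ)
      + (a • Pi.single i0 1 + b • Pi.single j 1) = 0 := by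
    rw [← hg0, Fintype.sum_sum_type]
    simp [hw, Fin.sum_univ_two, add_assoc, ha, hb]
  by_cases hab : a = 0 ∧ b = 0
  · exfalso
    obtain ⟨ha0, hb0⟩ := hab
    have hzsum : ∑ i : Fin n, g (Sum.inl i) • (bN i : Fin k → ℤ) = 0 := by
      simpa [ha0, hb0] using hsplit
    have hz : ∀ i, g (Sum.inl i) = 0 :=
      fun i => Fintype.linearIndependent_iff.mp hli _ hzsum i
    rcases s with i | i
    · exact hs (hz i)
    · fin_cases i
      · exact hs ha0
      · exact hs hb0
  · have hx : (a • Pi.single i0 1 + b • Pi.single j 1 : Fin k → ℤ) ∈ S := by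
      have hsumS : ∑ i : Fin n, g (Sum.inl i) • (bN i : Fin k → ℤ) ∈ S :=
        Submodule.sum_smul_mem S _ (fun i _ => (bN i).2)
      have : (a • Pi.single i0 1 + b • Pi.single j 1 : Fin k → ℤ)
          = -(∑ i : Fin n, g (Sum.inl i) • (bN i : Fin k → ℤ)) :=
        eq_neg_of_add_eq_zero_right hsplit
      rw [this]
      exact S.neg_mem hsumS
    have hprod : (m i0 : ℚ) ^ a * (m j : ℚ) ^ b = 1 := by
      have := (hS _).mp hx
      rwa [aux_prod k m i0 j (Ne.symm hj)] at this
    have hlog := aux_log a b (m i0) (m j) (hm i0) (hm j) hprod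
    have L0pos : 0 < Real.log (m i0) := Real.log_pos (by exact_mod_cast hm i0)
    have Ljpos : 0 < Real.log (m j) := Real.log_pos (by exact_mod_cast hm j)
    have ha0 : a ≠ 0 := by
      intro h0
      apply hab
      refine ⟨h0, ?_⟩
      have : (b : ℝ) * Real.log (m j) = 0 := by
        rw [h0] at hlog; simpa using hlog
      have := mul_eq_zero.mp this
      rcases this with h | h
      · exact_mod_cast h
      · exact absurd h Ljpos.ne'
    refine ⟨(-b : ℚ) / (a : ℚ), ?_⟩
    have haR : (a : ℝ) ≠ 0 := Int.cast_ne_zero.mpr ha0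
    push_cast
    rw [div_eq_div_iff Ljpos.ne' haR]
    push_cast at hlog
    linarith
lemma aux_ge (k : ℕ) (hk : 0 < k) (m : Fin k → ℕ) (hm : ∀ i, 1 < m i)
    (S : Submodule ℤ (Fin k → ℤ))
    (hS : ∀ g : Fin k → ℤ, g ∈ S ↔ ∏ i, ((m i : ℚ)) ^ (g i) = 1)
    (hrat : ∀ j : Fin k, ∃ q : ℚ, Real.log (m ⟨0, hk⟩) / Real.log (m j) = (q : ℝ)) :
    k - 1 ≤ Module.finrank ℤ S := by
  set i0 : Fin k := ⟨0, hk⟩ with hi0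
  have key : ∀ j : Fin k, j ≠ i0 → ∃ c d : ℕ, 0 < c ∧ 0 < d ∧
      ((c : ℤ) • Pi.single i0 (1:ℤ) + (-(d : ℤ)) • Pi.single j (1:ℤ) : Fin k → ℤ) ∈ S := by
    intro j hj
    obtain ⟨q, hq⟩ := hrat j
    have L0pos : 0 < Real.log (m i0) := Real.log_pos (by exact_mod_cast hm i0)
    have Ljpos : 0 < Real.log (m j) := Real.log_pos (by exact_mod_cast hm j)
    have hq' : Real.log (m i0) = (q : ℝ) * Real.log (m j) := by
      rw [← hq, div_mul_cancel₀ _ Ljpos.ne']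
    have hqpos : 0 < q := by
      have : (0:ℝ) < (q : ℝ) := by rw [← hq]; positivity
      exact_mod_cast this
    have hnum : 0 < q.num := Rat.num_pos.mpr hqpos
    refine ⟨q.den, q.num.toNat, q.pos, by omega, ?_⟩
    have hden : (q.den : ℝ) * (q : ℝ) = (q.num : ℝ) := by
      have h0 : ((q.num : ℚ) / (q.den : ℚ)) = q := Rat.num_div_den q
      have hd : ((q.den : ℚ)) ≠ 0 := by exact_mod_cast q.den_pos.ne'
      have : (q.den : ℚ) * q = q.num := by
        nth_rewrite 2 [← h0]
        rw [mul_comm, div_mul_cancel₀ _ hd]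
      exact_mod_cast this
    have h2 : (q.den : ℝ) * Real.log (m i0) = (q.num : ℝ) * Real.log (m j) := by
      rw [hq', ← mul_assoc, hden]
    have hA : (0:ℝ) < (m i0 : ℝ) := by exact_mod_cast lt_trans one_pos (hm i0)
    have hB : (0:ℝ) < (m j : ℝ) := by exact_mod_cast lt_trans one_pos (hm j)
    have h3 : ((m i0 : ℝ)) ^ (q.den) = ((m j : ℝ)) ^ (q.num.toNat) := by
      have l1 : Real.log ((m i0 : ℝ) ^ (q.den)) = Real.log ((m j : ℝ) ^ (q.num.toNat)) := by
        rw [Real.log_pow, Real.log_pow]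
        rw [show ((q.num.toNat : ℝ)) = (q.num : ℝ) by exact_mod_cast Int.toNat_of_nonneg hnum.le]
        exact h2
      have e1 := Real.exp_log (pow_pos hA q.den)
      have e2 := Real.exp_log (pow_pos hB q.num.toNat)
      rw [← e1, ← e2, l1]
    have hnat : m i0 ^ q.den = m j ^ q.num.toNat := by exact_mod_cast h3
    rw [hS]
    rw [aux_prod k m i0 j (Ne.symm hj)]
    have hmj0 : (0:ℚ) < ((m j : ℚ)) := by exact_mod_cast lt_trans one_pos (hm j)
    rw [zpow_natCast, zpow_neg, zpow_natCast]
    rw [mul_inv_eq_one₀ (pow_ne_zero _ hmj0.ne')]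
    exact_mod_cast congrArg (Nat.cast (R := ℚ)) hnat
  choose c d hc hd hmem using key
  set u : {j : Fin k // j ≠ i0} → (Fin k → ℤ) :=
    fun j => ((c j.1 j.2 : ℤ) • Pi.single i0 (1:ℤ) + (-(d j.1 j.2 : ℤ)) • Pi.single j.1 (1:ℤ))
    with hu
  have huind : LinearIndependent ℤ u := by
    rw [Fintype.linearIndependent_iff]
    intro gc hsum j
    have hcoord := congrFun hsum j.1
    simp only [hu, Finset.sum_apply, Pi.smul_apply, Pi.add_apply, smul_eq_mul,
      Pi.single_apply, Pi.zero_apply, mul_ite, mul_one, mul_zero, mul_neg] at hcoord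
    rw [Fintype.sum_eq_single j ?hside] at hcoord
    case hside =>
      intro x hx
      have hne : (j : Fin k) ≠ (x : Fin k) := fun hh => hx (Subtype.ext hh).symm
      simp [j.2, hne]
    simp only [j.2, if_false, zero_add, if_pos rfl, neg_eq_zero] at hcoord
    rcases (by simpa using hcoord : gc j = 0 ∨ d j.1 j.2 = 0) with h | h
    · exact h
    · exfalso; have := hd j.1 j.2; omega
  have hind : LinearIndependent ℤ (fun j => (⟨u j, hmem j.1 j.2⟩ : S)) := by
    apply LinearIndependent.of_comp S.subtype
    convert huind
    rfl
  haveI : Module.Finite ℤ S := Module.Finite.iff_fg.mpr (IsNoetherian.noetherian S)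
  have hcard := hind.fintype_card_le_finrank
  have hcard2 : Fintype.card {j : Fin k // j ≠ i0} = k - 1 := by
    simp [Fintype.card_subtype_compl]
  omega
/-- The intrinsic group has rank `k - 1` iff `ln m_1 / ln m_j ∈ ℚ` for all `j`. -/
theorem intrinsic_group_rank_eq_iff (k : ℕ) (hk : 0 < k) (m : Fin k → ℕ)
    (hm : ∀ i, 1 < m i) (G : AddSubgroup (Fin k → ℤ))
    (hG : ∀ g : Fin k → ℤ, g ∈ G ↔ ∏ i, ((m i : ℚ)) ^ (g i) = 1) :
    Module.finrank ℤ (AddSubgroup.toIntSubmodule G) = k - 1 ↔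
      ∀ j : Fin k, ∃ q : ℚ,
        Real.log (m ⟨0, hk⟩) / Real.log (m j) = (q : ℝ) := by
  set S : Submodule ℤ (Fin k → ℤ) := AddSubgroup.toIntSubmodule G with hSdef
  have hS : ∀ g : Fin k → ℤ, g ∈ S ↔ ∏ i, ((m i : ℚ)) ^ (g i) = 1 := hG
  obtain ⟨n, bN⟩ := Submodule.basisOfPid (Pi.basisFun ℤ (Fin k)) S
  have hn : Module.finrank ℤ S = n := by
    rw [Module.finrank_eq_card_basis bN, Fintype.card_fin]
  have hub : n ≤ k - 1 := by
    refine aux_le k hk m hm S hS n (fun i => (bN i : Fin k → ℤ)) (fun i => (bN i).2) ?_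
    exact bN.linearIndependent.map' S.subtype (Submodule.ker_subtype S)
  constructor
  · intro h j
    by_cases hj : j = ⟨0, hk⟩
    · refine ⟨1, ?_⟩
      have L0pos : 0 < Real.log (m ⟨0, hk⟩) := Real.log_pos (by exact_mod_cast hm _)
      rw [hj, Rat.cast_one, div_self L0pos.ne']
    · exact aux_rat k hk m hm S hS n (by omega) bN j hj
  · intro h
    have := aux_ge k hk m hm S hS h
    omega
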